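/- Let μ > 0, γ > 0 with γ > √μ/2, and let x ∈ ℝ. Then the second derivative of the proximal cost function g(u) = (x − u)²/(2μ) − log(γ/(γ² + u²)), namely g″(u) = 1/μ + 2(γ² − u²)/(γ² + u²)², is strictly positive for every u ∈ ℝ. -/

import Mathlib

/-- For μ > 0, γ > 0 with γ > √μ/2 and x ∈ ℝ, the second derivative of the
proximal cost g(u) = (x − u)²/(2μ) − log(γ/(γ² + u²)), namely
g″(u) = 1/μ + 2(γ² − u²)/(γ² + u²)², is strictly positive for all u. -/
theorem cauchy_prox_cost_second_deriv_pos (μ γ x : ℝ) (hμ : 0 < μ) (hγ : 0 < γ)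
    (hcond : Real.sqrt μ / 2 < γ) :
    ∀ u : ℝ,
      deriv (deriv (fun v : ℝ =>
          (x - v) ^ 2 / (2 * μ) - Real.log (γ / (γ ^ 2 + v ^ 2)))) u
        = 1 / μ + 2 * (γ ^ 2 - u ^ 2) / (γ ^ 2 + u ^ 2) ^ 2 ∧
      0 < deriv (deriv (fun v : ℝ =>
          (x - v) ^ 2 / (2 * μ) - Real.log (γ / (γ ^ 2 + v ^ 2)))) u := by
  have hq : ∀ v : ℝ, (0:ℝ) < γ ^ 2 + v ^ 2 := fun v => by positivity
  -- first derivative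
  have h1 : ∀ v : ℝ, HasDerivAt (fun v : ℝ =>
      (x - v) ^ 2 / (2 * μ) - Real.log (γ / (γ ^ 2 + v ^ 2)))
      ((v - x) / μ + 2 * v / (γ ^ 2 + v ^ 2)) v := by
    intro v
    have e : (fun v : ℝ => (x - v) ^ 2 / (2 * μ) - Real.log (γ / (γ ^ 2 + v ^ 2)))
        = fun v : ℝ => (x - v) ^ 2 / (2 * μ) - (Real.log γ - Real.log (γ ^ 2 + v ^ 2)) := by
      funext w; rw [Real.log_div hγ.ne' (hq w).ne']
    rw [e]
    have hA : HasDerivAt (fun w : ℝ => (x - w) ^ 2 / (2 * μ)) ((v - x) / μ) v := by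
      have := (((hasDerivAt_id v).const_sub x).pow 2).div_const (2 * μ)
      refine this.congr_deriv ?_
      simp only [id]
      field_simp
      ring
    have hB : HasDerivAt (fun w : ℝ => Real.log (γ ^ 2 + w ^ 2))
        (2 * v / (γ ^ 2 + v ^ 2)) v := by
      have := (((hasDerivAt_pow 2 v).const_add (γ ^ 2)).log (hq v).ne')
      convert this using 1
      ring
    have := hA.sub ((hasDerivAt_const v (Real.log γ)).sub hB)
    refine this.congr_deriv ?_
    ring
  have hd1 : deriv (fun v : ℝ =>
      (x - v) ^ 2 / (2 * μ) - Real.log (γ / (γ ^ 2 + v ^ 2)))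
      = fun v : ℝ => (v - x) / μ + 2 * v / (γ ^ 2 + v ^ 2) := by
    funext v; exact (h1 v).deriv
  intro u
  -- second derivative
  have h2 : HasDerivAt (fun v : ℝ => (v - x) / μ + 2 * v / (γ ^ 2 + v ^ 2))
      (1 / μ + 2 * (γ ^ 2 - u ^ 2) / (γ ^ 2 + u ^ 2) ^ 2) u := by
    have hA : HasDerivAt (fun v : ℝ => (v - x) / μ) (1 / μ) u := by
      have := ((hasDerivAt_id u).sub_const x).div_const μ
      simpa using this
    have hB : HasDerivAt (fun v : ℝ => 2 * v / (γ ^ 2 + v ^ 2))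
        ((2 * (γ ^ 2 + u ^ 2) - 2 * u * (2 * u)) / (γ ^ 2 + u ^ 2) ^ 2) u := by
      have hnum : HasDerivAt (fun v : ℝ => 2 * v) 2 u := by
        simpa using (hasDerivAt_id u).const_mul 2
      have hden : HasDerivAt (fun v : ℝ => γ ^ 2 + v ^ 2) (2 * u) u := by
        have := (hasDerivAt_pow 2 u).const_add (γ ^ 2)
        simpa using this
      exact hnum.div hden (hq u).ne'
    have e2 : (2 * (γ ^ 2 + u ^ 2) - 2 * u * (2 * u)) / (γ ^ 2 + u ^ 2) ^ 2
        = 2 * (γ ^ 2 - u ^ 2) / (γ ^ 2 + u ^ 2) ^ 2 := by ring_nf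
    rw [e2] at hB
    exact hA.add hB
  have heq : deriv (deriv (fun v : ℝ =>
      (x - v) ^ 2 / (2 * μ) - Real.log (γ / (γ ^ 2 + v ^ 2)))) u
      = 1 / μ + 2 * (γ ^ 2 - u ^ 2) / (γ ^ 2 + u ^ 2) ^ 2 := by
    rw [hd1]; exact h2.deriv
  refine ⟨heq, ?_⟩
  rw [heq]
  have hμ4 : μ < 4 * γ ^ 2 := by
    nlinarith [Real.sq_sqrt hμ.le, Real.sqrt_nonneg μ]
  have hq2 : (0:ℝ) < (γ ^ 2 + u ^ 2) ^ 2 := by positivity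
  rw [div_add_div _ _ hμ.ne' hq2.ne']
  apply div_pos
  · nlinarith [mul_nonneg hμ.le (sq_nonneg (u ^ 2 - 3 * γ ^ 2)),
      mul_pos (sub_pos.2 hμ4) hq2, sq_nonneg (u ^ 2 - 3 * γ ^ 2)]
  · positivity
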